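/- Let s = Σ_{v∈S} C(deg(v), q) where S is one side of a bipartite graph H with other side R of size r. If s > (q−1)·C(r,q), then there exists a q-element subset C ⊆ R whose common neighborhood in S has size at least q; consequently H contains K_{q,q}. -/

import Mathlib

theorem stmt5 {α β : Type*} [Fintype α] [Fintype β] [DecidableEq α] [DecidableEq β]
    (E : α → β → Prop) [∀ a, DecidablePred (E a)]
    (R : Finset α) (S : Finset β) (r q : ℕ) (hq : 1 ≤ q) (hr : R.card = r)
    (hcount : (q - 1) * r.choose q <
      ∑ v ∈ S, ((R.filter (fun a => E a v)).card).choose q) :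
    ∃ C ⊆ R, C.card = q ∧ q ≤ (S.filter (fun v => ∀ a ∈ C, E a v)).card ∧
      ∃ D ⊆ S, D.card = q ∧ ∀ a ∈ C, ∀ b ∈ D, E a b := by
  -- rewrite the sum by double counting
  have key : ∑ v ∈ S, ((R.filter (fun a => E a v)).card).choose q
      = ∑ C ∈ R.powersetCard q, (S.filter (fun v => ∀ a ∈ C, E a v)).card := by
    have h1 : ∀ v, ((R.filter (fun a => E a v)).card).choose q
        = ((R.powersetCard q).filter (fun C => ∀ a ∈ C, E a v)).card := by
      intro v
      rw [← Finset.card_powersetCard]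
      congr 1
      ext C
      simp only [Finset.mem_powersetCard, Finset.mem_filter, Finset.subset_iff,
        Finset.mem_filter]
      constructor
      · rintro ⟨h, hc⟩
        exact ⟨⟨fun x hx => (h hx).1, hc⟩, fun a ha => (h ha).2⟩
      · rintro ⟨⟨h, hc⟩, he⟩
        exact ⟨fun x hx => ⟨h hx, he x hx⟩, hc⟩
    rw [Finset.sum_congr rfl fun v _ => h1 v]
    simp only [Finset.card_filter]
    exact Finset.sum_comm
  rw [key] at hcount
  -- find a C with large common neighborhood
  by_contra hcon
  push_neg at hcon
  have hbound : ∀ C ∈ R.powersetCard q,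
      (S.filter (fun v => ∀ a ∈ C, E a v)).card ≤ q - 1 := by
    intro C hC
    rw [Finset.mem_powersetCard] at hC
    by_contra hlt
    push_neg at hlt
    have hq' : q ≤ (S.filter (fun v => ∀ a ∈ C, E a v)).card := by omega
    obtain ⟨D, hDsub, hDcard⟩ := Finset.exists_subset_card_eq hq'
    obtain ⟨a, ha, b, hb, hne⟩ :=
      hcon C hC.1 hC.2 hq' D (hDsub.trans (Finset.filter_subset _ _)) hDcard
    exact hne ((Finset.mem_filter.mp (hDsub hb)).2 a ha)
  have := Finset.sum_le_card_nsmul _ _ (q - 1) hbound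
  rw [Finset.card_powersetCard, hr, smul_eq_mul, mul_comm] at this
  omega
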